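/- Let (R, m) be a local ring and I an ideal of R. Then mI ≠ m(I : m) if and only if (I : m) ≠ (mI : m). -/

import Mathlib

open IsLocalRing

/-- Proposition 2.3 (1)⇔(2): an ideal `I` of a Noetherian local ring `(R, m)` satisfies
`mI ≠ m(I : m)` if and only if `(I : m) ≠ (mI : m)`. -/
theorem burch_iff_colon_ne {R : Type*} [CommRing R] [IsNoetherianRing R] [IsLocalRing R]
    (I : Ideal R) :
    maximalIdeal R * I ≠ maximalIdeal R * Submodule.colon I (maximalIdeal R) ↔
      Submodule.colon I (maximalIdeal R) ≠
        Submodule.colon (maximalIdeal R * I) (maximalIdeal R) := by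
  apply not_congr
  constructor
  · intro h
    apply le_antisymm
    · intro x hx
      rw [Submodule.mem_colon]
      intro p hp
      have : p * x ∈ maximalIdeal R * Submodule.colon I (maximalIdeal R) :=
        Ideal.mul_mem_mul hp hx
      rw [← h] at this
      simpa [mul_comm] using this
    · exact Submodule.colon_mono (Ideal.mul_le.mpr fun r _ s hs => I.mul_mem_left r hs) le_rfl
  · intro h
    apply le_antisymm
    · exact Ideal.mul_mono_right fun x hx => Submodule.mem_colon.mpr fun p hp => by
        simpa using Ideal.mul_mem_right p I hx
    · rw [h]
      rw [Ideal.mul_le]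
      intro r hr s hs
      have := Submodule.mem_colon.mp hs r hr
      simpa [mul_comm] using this
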